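/- Let C = {C_1,…,C_K} be a clustering of {1,…,n} and let A be an n×n stochastic matrix that has inter-cluster common influence w.r.t. C, has cluster-spanning-trees w.r.t. C, and has all diagonal entries positive. Let T ≥ 1, let u : ℕ → ℝ be T-periodic (u(t+T) = u(t) for all t) with Σ_{k=0}^{T−1} u(k) = 0, let α_1,…,α_K ∈ ℝ, and define the input I(t) ∈ ℝ^n by I_i(t) = α_p u(t) for i ∈ C_p. Then for every initial condition x(0) ∈ ℝ^n, the solution of x(t+1) = A x(t) + I(t) converges to a T-periodic, intra-cluster identical trajectory: there exist scalar functions v_1,…,v_K : ℕ → ℝ with v_p(t+T) = v_p(t) for all t, such that |x_j(t) − v_p(t)| → 0 as t → ∞ for every j ∈ C_p and every p = 1,…,K. -/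

import Mathlib

open Finset Filter Topology Matrix

/-- An `n × n` real matrix is stochastic if all entries are nonnegative and
every row sums to `1`. -/
def IsStochastic {n : ℕ} (A : Matrix (Fin n) (Fin n) ℝ) : Prop :=
  (∀ i j, 0 ≤ A i j) ∧ ∀ i, ∑ j, A i j = 1

/-- A clustering of `{1,…,n}`: pairwise disjoint subsets whose union is everything. -/
def IsClustering {n K : ℕ} (C : Fin K → Finset (Fin n)) : Prop :=
  (∀ p q, p ≠ q → Disjoint (C p) (C q)) ∧ ∀ i, ∃ p, i ∈ C p

/-- Reachability along directed edges of `G(A)`: edge from `j` to `i` iff `A i j > 0`. -/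
def Reaches {n : ℕ} (A : Matrix (Fin n) (Fin n) ℝ) : Fin n → Fin n → Prop :=
  Relation.ReflTransGen fun j i => 0 < A i j

/-- `A` has cluster-spanning-trees w.r.t. `C`: for each cluster there is a vertex from
which every vertex of the cluster is reachable in `G(A)`. -/
def HasClusterSpanningTrees {n K : ℕ} (C : Fin K → Finset (Fin n))
    (A : Matrix (Fin n) (Fin n) ℝ) : Prop :=
  ∀ p, ∃ v, ∀ i ∈ C p, Reaches A v i

/-- Inter-cluster common influence: `∑_{j ∈ C q} A i j` is the same for all `i ∈ C p`. -/
def InterClusterCommonInfluence {n K : ℕ} (C : Fin K → Finset (Fin n))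
    (A : Matrix (Fin n) (Fin n) ℝ) : Prop :=
  ∀ p q, ∀ i ∈ C p, ∀ i' ∈ C p, ∑ j ∈ C q, A i j = ∑ j ∈ C q, A i' j

/-- Cluster ergodicity coefficient
`μ_C(A) = min_p min_{i,j ∈ C p} ∑_k min (A i k) (A j k)`. -/
noncomputable def muC {n K : ℕ} (C : Fin K → Finset (Fin n))
    (A : Matrix (Fin n) (Fin n) ℝ) : ℝ :=
  sInf {s | ∃ p, ∃ i ∈ C p, ∃ j ∈ C p, s = ∑ k, min (A i k) (A j k)}

/-- Cluster Hajnal diameter `Δ_C(A) = max_p max_{i,j ∈ C p} max_k |A i k - A j k|`. -/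
noncomputable def DeltaC {n K : ℕ} (C : Fin K → Finset (Fin n))
    (A : Matrix (Fin n) (Fin n) ℝ) : ℝ :=
  sSup {d | ∃ p, ∃ i ∈ C p, ∃ j ∈ C p, ∃ k, d = |A i k - A j k|}

/-- The cluster-consensus subspace `S_C`. -/
def SC {n K : ℕ} (C : Fin K → Finset (Fin n)) : Set (Fin n → ℝ) :=
  {x | ∀ p, ∀ i ∈ C p, ∀ j ∈ C p, x i = x j}

/-- Left product `prodFrom A a m = A (a+m-1) * ⋯ * A (a+1) * A a` (with `m` factors). -/
def prodFrom {n : ℕ} (A : ℕ → Matrix (Fin n) (Fin n) ℝ) (a : ℕ) :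
    ℕ → Matrix (Fin n) (Fin n) ℝ
  | 0 => 1
  | m + 1 => A (a + m) * prodFrom A a m


lemma powNonneg' {N : ℕ} (A : Matrix (Fin N) (Fin N) ℝ) (hA : IsStochastic A) :
    ∀ m i j, 0 ≤ (A ^ m) i j := by
  intro m
  induction m with
  | zero => intro i j; by_cases h : i = j <;> simp [Matrix.one_apply, h]
  | succ m ih =>
    intro i j
    rw [pow_succ, Matrix.mul_apply]
    exact Finset.sum_nonneg fun k _ => mul_nonneg (ih i k) (hA.1 k j)

lemma powRowSum' {N : ℕ} (A : Matrix (Fin N) (Fin N) ℝ) (hA : IsStochastic A) :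
    ∀ m i, ∑ j, (A ^ m) i j = 1 := by
  intro m
  induction m with
  | zero => intro i; simp [Matrix.one_apply]
  | succ m ih =>
    intro i
    rw [pow_succ]
    simp only [Matrix.mul_apply]
    rw [Finset.sum_comm]
    have h : ∀ k, ∑ j, (A ^ m) i k * A k j = (A ^ m) i k := by
      intro k; rw [← Finset.mul_sum, hA.2 k, mul_one]
    simp only [h]
    exact ih i

section mass
variable {N : ℕ} (M : Matrix (Fin N) (Fin N) ℝ) (hM : IsStochastic M)
  (S : Finset (Fin N)) (hS : ∀ l ∈ S, ∀ k, 0 < M l k → k ∈ S)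

include hM hS

lemma rowZero (l : Fin N) (hl : l ∈ S) (k : Fin N) (hk : k ∉ S) : M l k = 0 := by
  by_contra hne
  exact hk (hS l hl k (lt_of_le_of_ne (hM.1 l k) (Ne.symm hne)))

lemma closedRow (l : Fin N) (hl : l ∈ S) : ∑ k ∈ S, M l k = 1 := by
  rw [← hM.2 l]
  apply Finset.sum_subset (subset_univ _)
  intro k _ hk
  exact rowZero M hM S hS l hl k hk

omit hM hS in
lemma powExpand (t : ℕ) (x : Fin N) (s : Finset (Fin N)) :
    ∑ k ∈ s, (M^(t+1)) x k = ∑ l, (M^t) x l * ∑ k ∈ s, M l k := by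
  calc ∑ k ∈ s, (M^(t+1)) x k = ∑ k ∈ s, ∑ l, (M^t) x l * M l k := by
        apply Finset.sum_congr rfl; intro k _; rw [pow_succ, Matrix.mul_apply]
    _ = ∑ l, ∑ k ∈ s, (M^t) x l * M l k := Finset.sum_comm
    _ = ∑ l, (M^t) x l * ∑ k ∈ s, M l k := by
        apply Finset.sum_congr rfl; intro l _; rw [Finset.mul_sum]

omit hS in
lemma massOne (t : ℕ) (x : Fin N) :
    ∑ k ∈ S, (M^t) x k + ∑ k ∈ univ \ S, (M^t) x k = 1 := by
  rw [add_comm, Finset.sum_sdiff (subset_univ S)]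
  exact powRowSum' M hM t x

lemma massMono (t : ℕ) (x : Fin N) :
    ∑ k ∈ S, (M^t) x k ≤ ∑ k ∈ S, (M^(t+1)) x k := by
  rw [powExpand]
  calc ∑ k ∈ S, (M^t) x k = ∑ l ∈ S, (M^t) x l * ∑ k ∈ S, M l k := by
        apply Finset.sum_congr rfl
        intro l hl
        rw [closedRow M hM S hS l hl, mul_one]
    _ ≤ ∑ l, (M^t) x l * ∑ k ∈ S, M l k := by
        apply Finset.sum_le_sum_of_subset_of_nonneg (subset_univ _)
        intro l _ _
        exact mul_nonneg (powNonneg' M hM t x l) (Finset.sum_nonneg fun k _ => hM.1 l k)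

lemma massMono' (t t' : ℕ) (h : t ≤ t') (x : Fin N) :
    ∑ k ∈ S, (M^t) x k ≤ ∑ k ∈ S, (M^t') x k := by
  induction t', h using Nat.le_induction with
  | base => exact le_refl _
  | succ t' h ih => exact le_trans ih (massMono M hM S hS t' x)

lemma escMono (t t' : ℕ) (h : t ≤ t') (x : Fin N) :
    ∑ k ∈ univ \ S, (M^t') x k ≤ ∑ k ∈ univ \ S, (M^t) x k := by
  have h1 := massOne M hM S t x
  have h2 := massOne M hM S t' x
  have := massMono' M hM S hS t t' h x
  linarith

lemma escGeo (η : ℝ) (hη1 : η ≤ 1) (hηS : ∀ i, η ≤ ∑ k ∈ S, M i k) :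
    ∀ x s, ∑ k ∈ univ \ S, (M^s) x k ≤ (1-η)^s := by
  intro x s
  induction s with
  | zero =>
    have h1 := massOne M hM S 0 x
    have h2 : 0 ≤ ∑ k ∈ S, (M^0) x k := Finset.sum_nonneg fun k _ => powNonneg' M hM 0 x k
    simp only [pow_zero] at h1 h2 ⊢
    linarith
  | succ s ih =>
    rw [powExpand]
    have hsplit : ∑ l, (M^s) x l * ∑ k ∈ univ \ S, M l k
        = ∑ l ∈ S, (M^s) x l * ∑ k ∈ univ \ S, M l k
          + ∑ l ∈ univ \ S, (M^s) x l * ∑ k ∈ univ \ S, M l k := by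
      rw [add_comm, Finset.sum_sdiff (subset_univ S)]
    rw [hsplit]
    have hzero : ∀ l ∈ S, (M^s) x l * ∑ k ∈ univ \ S, M l k = 0 := by
      intro l hl
      have : ∑ k ∈ univ \ S, M l k = 0 :=
        Finset.sum_eq_zero fun k hk => rowZero M hM S hS l hl k (Finset.mem_sdiff.1 hk).2
      rw [this, mul_zero]
    rw [Finset.sum_eq_zero hzero, zero_add]
    have hbnd : ∑ l ∈ univ \ S, (M^s) x l * ∑ k ∈ univ \ S, M l k
        ≤ ∑ l ∈ univ \ S, (M^s) x l * (1 - η) := by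
      apply Finset.sum_le_sum
      intro l _
      apply mul_le_mul_of_nonneg_left _ (powNonneg' M hM s x l)
      have hrow := hM.2 l
      have : ∑ k ∈ S, M l k + ∑ k ∈ univ \ S, M l k = 1 := by
        rw [add_comm, Finset.sum_sdiff (subset_univ S)]; exact hrow
      have := hηS l
      linarith
    apply le_trans hbnd
    rw [← Finset.sum_mul, pow_succ]
    exact mul_le_mul_of_nonneg_right ih (by linarith)

end mass

/-- Key convexity/Hajnal-type inequality. -/
lemma auxHJ {N : ℕ} {ι : Type*} [Fintype ι] [DecidableEq ι]
    (w w' xv : Fin N → ℝ) (g : Fin N → ι)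
    (hw : ∀ k, 0 ≤ w k) (hw' : ∀ k, 0 ≤ w' k)
    (hw1 : ∑ k, w k = 1) (hw'1 : ∑ k, w' k = 1)
    (hcl : ∀ q, ∑ k ∈ univ.filter (fun k => g k = q), w k
        = ∑ k ∈ univ.filter (fun k => g k = q), w' k)
    (c : ι → ℝ) (D μ : ℝ) (hD : 0 ≤ D)
    (hc : ∀ k, (0 < w k ∨ 0 < w' k) → c (g k) ≤ xv k ∧ xv k ≤ c (g k) + D)
    (hμ : μ ≤ ∑ k, min (w k) (w' k)) :
    |∑ k, w k * xv k - ∑ k, w' k * xv k| ≤ (1 - μ) * D := by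
  classical
  set v : Fin N → ℝ := fun k => min (w k) (w' k) with hv
  have hvw : ∀ k, v k ≤ w k := fun k => min_le_left _ _
  have hvw' : ∀ k, v k ≤ w' k := fun k => min_le_right _ _
  have hvnn : ∀ k, 0 ≤ v k := fun k => le_min (hw k) (hw' k)
  have hzero : ∑ k, (w k - w' k) * c (g k) = 0 := by
    have := Finset.sum_fiberwise (univ : Finset (Fin N)) g
      (fun k => (w k - w' k) * c (g k))
    rw [← this]
    apply Finset.sum_eq_zero
    intro q _
    have : ∑ k ∈ univ.filter (fun k => g k = q), (w k - w' k) * c (g k)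
        = ∑ k ∈ univ.filter (fun k => g k = q), (w k - w' k) * c q := by
      apply Finset.sum_congr rfl
      intro k hk
      rw [mem_filter] at hk
      rw [hk.2]
    rw [this, ← Finset.sum_mul, Finset.sum_sub_distrib, hcl q, sub_self, zero_mul]
  -- key rewriting
  have key : ∑ k, w k * xv k - ∑ k, w' k * xv k
      = (∑ k, (w k - v k) * (xv k - c (g k))) - (∑ k, (w' k - v k) * (xv k - c (g k))) := by
    have e1 : (∑ k, (w k - v k) * (xv k - c (g k))) - (∑ k, (w' k - v k) * (xv k - c (g k)))
        = ∑ k, (w k - w' k) * (xv k - c (g k)) := by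
      rw [← Finset.sum_sub_distrib]; apply Finset.sum_congr rfl; intro k _; ring
    rw [e1]
    have e2 : ∑ k, (w k - w' k) * (xv k - c (g k))
        = (∑ k, (w k - w' k) * xv k) - ∑ k, (w k - w' k) * c (g k) := by
      rw [← Finset.sum_sub_distrib]; apply Finset.sum_congr rfl; intro k _; ring
    rw [e2, hzero, sub_zero, ← Finset.sum_sub_distrib]
    apply Finset.sum_congr rfl; intro k _; ring
  -- bounds
  have hbnd : ∀ (ww : Fin N → ℝ), (∀ k, 0 ≤ ww k) → (∑ k, ww k = 1) →
      (∀ k, v k ≤ ww k) → (∀ k, 0 < ww k → c (g k) ≤ xv k ∧ xv k ≤ c (g k) + D) →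
      0 ≤ ∑ k, (ww k - v k) * (xv k - c (g k)) ∧
      ∑ k, (ww k - v k) * (xv k - c (g k)) ≤ (1 - μ) * D := by
    intro ww hnn h1 hvle hcc
    constructor
    · apply Finset.sum_nonneg
      intro k _
      rcases eq_or_lt_of_le (hvle k) with h | h
      · rw [← h, sub_self, zero_mul]
      · have hwk : 0 < ww k := lt_of_le_of_lt (hvnn k) h
        have := (hcc k hwk).1
        have h2 : 0 ≤ xv k - c (g k) := by linarith
        exact mul_nonneg (by linarith) h2
    · have step : ∑ k, (ww k - v k) * (xv k - c (g k)) ≤ ∑ k, (ww k - v k) * D := by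
        apply Finset.sum_le_sum
        intro k _
        rcases eq_or_lt_of_le (hvle k) with h | h
        · rw [← h, sub_self, zero_mul, zero_mul]
        · have hwk : 0 < ww k := lt_of_le_of_lt (hvnn k) h
          have := (hcc k hwk).2
          have h3 : xv k - c (g k) ≤ D := by linarith
          apply mul_le_mul_of_nonneg_left h3 (by linarith)
      apply le_trans step
      rw [← Finset.sum_mul, Finset.sum_sub_distrib, h1]
      apply mul_le_mul_of_nonneg_right _ hD
      have : μ ≤ ∑ k, v k := hμ
      linarith
  have b1 := hbnd w hw hw1 hvw (fun k hk => hc k (Or.inl hk))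
  have b2 := hbnd w' hw' hw'1 hvw' (fun k hk => hc k (Or.inr hk))
  rw [key, abs_sub_le_iff]
  constructor <;> linarith [b1.1, b1.2, b2.1, b2.2]

/-- sum against a function constant on a finset, with equal total weights -/
lemma auxConst {β : Type*} (s : Finset β) (w w' S : β → ℝ)
    (hS : ∀ a ∈ s, ∀ b ∈ s, S a = S b)
    (hw : ∑ l ∈ s, w l = ∑ l ∈ s, w' l) :
    ∑ l ∈ s, w l * S l = ∑ l ∈ s, w' l * S l := by
  rcases s.eq_empty_or_nonempty with h | ⟨l0, hl0⟩
  · simp [h]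
  · have e : ∀ (ww : β → ℝ), ∑ l ∈ s, ww l * S l = (∑ l ∈ s, ww l) * S l0 := by
      intro ww
      rw [Finset.sum_mul]
      apply Finset.sum_congr rfl
      intro l hl
      rw [hS l hl l0 hl0]
    rw [e w, e w', hw]

/-- powers of stochastic matrices: entries nonneg -/
lemma powNonneg2 {N : ℕ} (A : Matrix (Fin N) (Fin N) ℝ) (hA : IsStochastic A) :
    ∀ m i j, 0 ≤ (A ^ m) i j := by
  intro m
  induction m with
  | zero => intro i j; by_cases h : i = j <;> simp [Matrix.one_apply, h]
  | succ m ih =>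
    intro i j
    rw [pow_succ, Matrix.mul_apply]
    exact Finset.sum_nonneg fun k _ => mul_nonneg (ih i k) (hA.1 k j)

lemma powRowSum2 {N : ℕ} (A : Matrix (Fin N) (Fin N) ℝ) (hA : IsStochastic A) :
    ∀ m i, ∑ j, (A ^ m) i j = 1 := by
  intro m
  induction m with
  | zero => intro i; simp [Matrix.one_apply]
  | succ m ih =>
    intro i
    rw [pow_succ]
    simp only [Matrix.mul_apply]
    rw [Finset.sum_comm]
    have : ∀ k, ∑ j, (A ^ m) i k * A k j = (A ^ m) i k := by
      intro k
      rw [← Finset.mul_sum, hA.2 k, mul_one]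
    simp only [this]
    exact ih i

lemma powStochastic {N : ℕ} (A : Matrix (Fin N) (Fin N) ℝ) (hA : IsStochastic A) (m : ℕ) :
    IsStochastic (A ^ m) := ⟨powNonneg2 A hA m, powRowSum2 A hA m⟩

lemma entryLeOne {N : ℕ} (A : Matrix (Fin N) (Fin N) ℝ) (hA : IsStochastic A) (i j : Fin N) :
    A i j ≤ 1 := by
  rw [← hA.2 i]
  exact Finset.single_le_sum (fun k _ => hA.1 i k) (mem_univ j)

/-- c^(t/L) → 0 -/
lemma divTend (c : ℝ) (hc0 : 0 ≤ c) (hc1 : c < 1) (L : ℕ) (hL : 1 ≤ L) :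
    Tendsto (fun t : ℕ => c ^ (t / L)) atTop (𝓝 0) := by
  apply (tendsto_pow_atTop_nhds_zero_of_lt_one hc0 hc1).comp
  apply tendsto_atTop_atTop.2
  intro b
  exact ⟨b * L, fun n hn => (Nat.le_div_iff_mul_le (by omega)).2 hn⟩

lemma sumGeo (c : ℝ) (hc0 : 0 ≤ c) (hc1 : c < 1) (L : ℕ) (hL : 1 ≤ L) :
    Summable (fun m : ℕ => c ^ (m / L)) := by
  set c' : ℝ := max c (1/2) with hc'
  have hc'0 : (0:ℝ) < c' := lt_of_lt_of_le (by norm_num) (le_max_right _ _)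
  have hc'1 : c' < 1 := max_lt hc1 (by norm_num)
  have hcle : c ≤ c' := le_max_left _ _
  set β : ℝ := c' ^ ((L : ℝ)⁻¹) with hβ
  have hβ0 : 0 ≤ β := Real.rpow_nonneg hc'0.le _
  have hβ1 : β < 1 := Real.rpow_lt_one hc'0.le hc'1 (by positivity)
  have hsum : Summable (fun m : ℕ => c'⁻¹ * β ^ m) :=
    (summable_geometric_of_lt_one hβ0 hβ1).mul_left _
  apply Summable.of_nonneg_of_le (fun m => by positivity) _ hsum
  intro m
  have h1 : c ^ (m / L) ≤ c' ^ (m / L) := pow_le_pow_left₀ hc0 hcle _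
  apply le_trans h1
  have h2 : c' ^ (m / L) = c' ^ ((m / L : ℕ) : ℝ) := by
    rw [Real.rpow_natCast]
  have h3 : ((m : ℝ) / (L : ℝ)) - 1 ≤ ((m / L : ℕ) : ℝ) := by
    have : m < (m / L + 1) * L := by
      have := Nat.div_add_mod m L
      have := Nat.mod_lt m (show 0 < L by omega)
      nlinarith [Nat.div_add_mod m L, Nat.mod_lt m (show 0 < L by omega)]
    have hLpos : (0:ℝ) < L := by positivity
    have h5 : (m:ℝ)/L < (((m / L : ℕ):ℝ)+1) := by
      rw [div_lt_iff₀ hLpos]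
      exact_mod_cast this
    linarith
  have h4 : c' ^ ((m / L : ℕ) : ℝ) ≤ c' ^ ((m : ℝ) / (L : ℝ) - 1) :=
    Real.rpow_le_rpow_of_exponent_ge hc'0 hc'1.le h3
  rw [h2]
  apply le_trans h4
  rw [Real.rpow_sub hc'0, Real.rpow_one, div_eq_mul_inv, mul_comm]
  apply mul_le_mul_of_nonneg_left _ (by positivity)
  rw [hβ, ← Real.rpow_natCast (c' ^ ((L:ℝ)⁻¹)) m, ← Real.rpow_mul hc'0.le]
  apply le_of_eq
  congr 1
  ring

/-- convergence along all residue classes mod T implies convergence -/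
lemma resTend (T : ℕ) (hT : 1 ≤ T) (f : ℕ → ℝ)
    (h : ∀ r < T, Tendsto (fun m => f (r + m * T)) atTop (𝓝 0)) :
    Tendsto f atTop (𝓝 0) := by
  rw [Metric.tendsto_atTop]
  intro ε hε
  have hN : ∀ r < T, ∃ N, ∀ m ≥ N, dist (f (r + m * T)) 0 < ε := by
    intro r hr
    exact Metric.tendsto_atTop.1 (h r hr) ε hε
  classical
  choose! N hNs using hN
  set M := (Finset.range T).sup N with hM
  refine ⟨T * (M + 1), fun t ht => ?_⟩
  have hr : t % T < T := Nat.mod_lt t (by omega)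
  have ht2 : t % T + (t / T) * T = t := Nat.mod_add_div' t T
  have hdiv : M ≤ t / T := by
    have h1 : M + 1 ≤ t / T := by
      rw [Nat.le_div_iff_mul_le (by omega : 0 < T)]
      calc (M + 1) * T = T * (M+1) := by ring
        _ ≤ t := ht
    omega
  have := hNs (t % T) hr (t / T) (le_trans (Finset.le_sup (Finset.mem_range.2 hr)) hdiv)
  rwa [ht2] at this

theorem thmE {N : ℕ} (A : Matrix (Fin N) (Fin N) ℝ) (hA : IsStochastic A)
    (hd : ∀ i, 0 < A i i) :
    ∃ (P : Matrix (Fin N) (Fin N) ℝ) (c γ : ℝ) (L : ℕ), 0 ≤ c ∧ 0 ≤ γ ∧ γ < 1 ∧ 1 ≤ L ∧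
      ∀ m i j, |(A ^ m) i j - P i j| ≤ c * γ ^ (m / L) := by
  classical
  rcases isEmpty_or_nonempty (Fin N) with hN | hN
  · exact ⟨A, 1, 1/2, 1, by norm_num, by norm_num, by norm_num, le_rfl,
      fun m i j => (hN.false i).elim⟩
  set R : Fin N → Fin N → Prop := Relation.ReflTransGen (fun a b => 0 < A a b) with hR
  have hRrefl : ∀ i, R i i := fun i => Relation.ReflTransGen.refl
  have hRtrans : ∀ {i j k}, R i j → R j k → R i k := fun h1 h2 => h1.trans h2
  have hnn := powNonneg' A hA
  have hrs := powRowSum' A hA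
  have hst : ∀ m, IsStochastic (A ^ m) := fun m => ⟨hnn m, hrs m⟩
  have hle1 : ∀ m i j, (A ^ m) i j ≤ 1 := by
    intro m i j
    rw [← hrs m i]
    exact Finset.single_le_sum (fun k _ => hnn m i k) (mem_univ j)
  have pmono : ∀ m i j, 0 < (A^m) i j → 0 < (A^(m+1)) i j := by
    intro m i j h
    rw [pow_succ', Matrix.mul_apply]
    exact lt_of_lt_of_le (mul_pos (hd i) h)
      (Finset.single_le_sum (fun k _ => mul_nonneg (hA.1 i k) (hnn m k j)) (mem_univ i))
  have pmono' : ∀ {m m'} (i j : Fin N), m ≤ m' → 0 < (A^m) i j → 0 < (A^m') i j := by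
    intro m m' i j hle
    induction m', hle using Nat.le_induction with
    | base => exact id
    | succ m' hm ih => intro h; exact pmono _ _ _ (ih h)
  have chain_pow : ∀ i j, R i j → ∃ m, 0 < (A^m) i j := by
    intro i j h
    induction h with
    | refl => exact ⟨0, by simp [Matrix.one_apply]⟩
    | @tail b c hab hbc ih =>
      obtain ⟨m, hm⟩ := ih
      refine ⟨m+1, ?_⟩
      rw [pow_succ, Matrix.mul_apply]
      exact lt_of_lt_of_le (mul_pos hm hbc)
        (Finset.single_le_sum (fun k _ => mul_nonneg (hnn m i k) (hA.1 k c)) (mem_univ b))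
  have pow_chain : ∀ m i j, 0 < (A^m) i j → R i j := by
    intro m
    induction m with
    | zero =>
      intro i j h
      rw [pow_zero] at h
      by_cases hij : i = j
      · subst hij; exact hRrefl i
      · simp [Matrix.one_apply, hij] at h
    | succ m ih =>
      intro i j h
      rw [pow_succ, Matrix.mul_apply] at h
      obtain ⟨k, hk⟩ := Finset.exists_ne_zero_of_sum_ne_zero (ne_of_gt h)
      obtain ⟨h1, h2⟩ := mul_ne_zero_iff.1 hk.2
      exact Relation.ReflTransGen.tail (ih i k (lt_of_le_of_ne (hnn m i k) (Ne.symm h1)))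
        (lt_of_le_of_ne (hA.1 k j) (Ne.symm h2))
  obtain ⟨L0, hL01, hL0pos⟩ : ∃ L0, 1 ≤ L0 ∧ ∀ i j, R i j → 0 < (A^L0) i j := by
    have hch : ∀ p : Fin N × Fin N, ∃ m, R p.1 p.2 → 0 < (A^m) p.1 p.2 := by
      intro p
      by_cases h : R p.1 p.2
      · obtain ⟨m, hm⟩ := chain_pow _ _ h; exact ⟨m, fun _ => hm⟩
      · exact ⟨0, fun hc => absurd hc h⟩
    choose f hf using hch
    refine ⟨1 + Finset.univ.sup f, by omega, fun i j hij => ?_⟩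
    exact pmono' i j (by have := Finset.le_sup (f := f) (mem_univ (i,j)); omega) (hf (i,j) hij)
  set B := A ^ L0 with hB
  have hBst : IsStochastic B := hst L0
  have hBpow : ∀ s, B ^ s = A ^ (L0 * s) := fun s => by rw [hB, ← pow_mul]
  have hBchain : ∀ s i j, 0 < (B^s) i j → R i j := by
    intro s i j h
    rw [hBpow] at h
    exact pow_chain _ i j h
  obtain ⟨ε, hε0, hε1, hεB⟩ : ∃ ε : ℝ, 0 < ε ∧ ε ≤ 1 ∧ ∀ i j, R i j → ε ≤ B i j := by
    set s : Finset (Fin N × Fin N) := univ.filter (fun p => R p.1 p.2) with hs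
    have hsne : s.Nonempty := by
      obtain ⟨i⟩ := hN
      exact ⟨(i, i), by simp [hs, hRrefl i]⟩
    refine ⟨s.inf' hsne (fun p => B p.1 p.2), ?_, ?_, ?_⟩
    · obtain ⟨p, hp, he⟩ := Finset.exists_mem_eq_inf' hsne (fun p => B p.1 p.2)
      rw [he]
      exact hL0pos _ _ ((mem_filter.1 hp).2)
    · obtain ⟨p, hp, he⟩ := Finset.exists_mem_eq_inf' hsne (fun p => B p.1 p.2)
      rw [he]
      exact hle1 L0 _ _
    · intro i j h
      have hmem : (i, j) ∈ s := mem_filter.2 ⟨mem_univ (i,j), h⟩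
      exact Finset.inf'_le (fun p => B p.1 p.2) hmem
  set Ess : Fin N → Prop := fun i => ∀ k, R i k → R k i with hEssDef
  have hessreach : ∀ i, ∃ e, R i e ∧ Ess e := by
    have main : ∀ c (i : Fin N), (univ.filter (R i ·)).card ≤ c → ∃ e, R i e ∧ Ess e := by
      intro c
      induction c with
      | zero =>
        intro i h
        exfalso
        have hm : i ∈ univ.filter (R i ·) := mem_filter.2 ⟨mem_univ _, hRrefl i⟩
        have := Finset.card_pos.2 ⟨i, hm⟩
        omega
      | succ c ih =>
        intro i hcard
        by_cases he : Ess i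
        · exact ⟨i, hRrefl i, he⟩
        · have he' : ¬ (∀ k, R i k → R k i) := he
          push_neg at he'
          obtain ⟨k, hik, hki⟩ := he'
          have hsub : univ.filter (R k ·) ⊂ univ.filter (R i ·) := by
            rw [Finset.ssubset_iff_subset_ne]
            constructor
            · intro l hl
              exact mem_filter.2 ⟨mem_univ _, hRtrans hik ((mem_filter.1 hl).2)⟩
            · intro heq
              have : i ∈ univ.filter (R k ·) := by
                rw [heq]; exact mem_filter.2 ⟨mem_univ _, hRrefl i⟩
              exact hki ((mem_filter.1 this).2)
          have hlt := Finset.card_lt_card hsub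
          obtain ⟨e, hke, hee⟩ := ih k (by omega)
          exact ⟨e, hRtrans hik hke, hee⟩
    intro i
    exact main _ i le_rfl
  set ES : Finset (Fin N) := univ.filter Ess with hES
  have hclosedE : ∀ e k, Ess e → R e k → Ess k := by
    intro e k he hek l hkl
    exact hRtrans (he l (hRtrans hek hkl)) hek
  have hESclosedA : ∀ l ∈ ES, ∀ k, 0 < A l k → k ∈ ES := by
    intro l hl k h
    exact mem_filter.2 ⟨mem_univ _,
      hclosedE l k ((mem_filter.1 hl).2) (Relation.ReflTransGen.single h)⟩
  have hESclosedB : ∀ l ∈ ES, ∀ k, 0 < B l k → k ∈ ES := by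
    intro l hl k h
    exact mem_filter.2 ⟨mem_univ _, hclosedE l k ((mem_filter.1 hl).2)
      (hBchain 1 l k (by rwa [pow_one]))⟩
  obtain ⟨η, hη0, hη1, hηE⟩ : ∃ η : ℝ, 0 < η ∧ η ≤ 1 ∧ ∀ i, η ≤ ∑ k ∈ ES, B i k := by
    choose e he using hessreach
    have hne : (univ : Finset (Fin N)).Nonempty := univ_nonempty
    refine ⟨univ.inf' hne (fun i => B i (e i)), ?_, ?_, ?_⟩
    · obtain ⟨i, _, heq⟩ := Finset.exists_mem_eq_inf' hne (fun i => B i (e i))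
      rw [heq]
      exact hL0pos _ _ (he i).1
    · obtain ⟨i, _, heq⟩ := Finset.exists_mem_eq_inf' hne (fun i => B i (e i))
      rw [heq]
      exact hle1 L0 _ _
    · intro i
      have hmem : e i ∈ ES := mem_filter.2 ⟨mem_univ _, (he i).2⟩
      exact le_trans (Finset.inf'_le _ (mem_univ i))
        (Finset.single_le_sum (fun k _ => hBst.1 i k) hmem)
  have hescB : ∀ x s, ∑ k ∈ univ \ ES, (B^s) x k ≤ (1-η)^s :=
    fun x s => escGeo B hBst ES hESclosedB η hη1 hηE x s
  have hesc : ∀ x t, ∑ k ∈ univ \ ES, (A^t) x k ≤ (1-η)^(t / L0) := by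
    intro x t
    have h1 : L0 * (t / L0) ≤ t := Nat.mul_div_le t L0
    calc ∑ k ∈ univ \ ES, (A^t) x k ≤ ∑ k ∈ univ \ ES, (A^(L0 * (t / L0))) x k :=
          escMono A hA ES hESclosedA _ _ h1 x
      _ = ∑ k ∈ univ \ ES, (B^(t / L0)) x k := by rw [hBpow]
      _ ≤ (1-η)^(t / L0) := hescB x _
  -- per-class limits
  have hclass : ∀ j, Ess j → ∃ d : ℝ × (Fin N → ℝ),
      (0 ≤ d.1 ∧ d.1 ≤ 1) ∧
      (∀ s x, R j x → |(A^s) x j - d.1| ≤ (1-ε)^(s / L0)) ∧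
      (∀ t x, |(∑ k ∈ univ.filter (fun k => R j k), (A^t) x k) - d.2 x| ≤ (1-η)^(t / L0)) ∧
      (∀ x, 0 ≤ d.2 x ∧ d.2 x ≤ 1) := by
    intro j hj
    set F : Finset (Fin N) := univ.filter (fun k => R j k) with hF
    have hjF : j ∈ F := mem_filter.2 ⟨mem_univ _, hRrefl j⟩
    have hFne : F.Nonempty := ⟨j, hjF⟩
    have hmemF : ∀ {x}, x ∈ F → R j x := fun hx => (mem_filter.1 hx).2
    have hFcomm : ∀ x ∈ F, ∀ k ∈ F, R x k := fun x hx k hk =>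
      hRtrans (hj x (hmemF hx)) (hmemF hk)
    have hFclosedA : ∀ l ∈ F, ∀ k, 0 < A l k → k ∈ F := fun l hl k h =>
      mem_filter.2 ⟨mem_univ _, hRtrans (hmemF hl) (Relation.ReflTransGen.single h)⟩
    have hFclosedB : ∀ l ∈ F, ∀ k, 0 < B l k → k ∈ F := fun l hl k h =>
      mem_filter.2 ⟨mem_univ _, hRtrans (hmemF hl) (hBchain 1 l k (by rwa [pow_one]))⟩
    set Ms : ℕ → ℝ := fun t => F.sup' hFne (fun k => (A^t) k j) with hMs
    set ms : ℕ → ℝ := fun t => F.inf' hFne (fun k => (A^t) k j) with hms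
    have hstep : ∀ t x, x ∈ F → ms t ≤ (A^(t+1)) x j ∧ (A^(t+1)) x j ≤ Ms t := by
      intro t x hx
      have hexp : (A^(t+1)) x j = ∑ l, A x l * (A^t) l j := by
        rw [pow_succ', Matrix.mul_apply]
      constructor
      · rw [hexp]
        calc ms t = ∑ l, A x l * ms t := by rw [← Finset.sum_mul, hA.2 x, one_mul]
          _ ≤ ∑ l, A x l * (A^t) l j := by
            apply Finset.sum_le_sum
            intro l _
            by_cases hl : l ∈ F
            · exact mul_le_mul_of_nonneg_left (Finset.inf'_le (fun k => (A^t) k j) hl) (hA.1 x l)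
            · rw [rowZero A hA F hFclosedA x hx l hl, zero_mul, zero_mul]
      · rw [hexp]
        calc ∑ l, A x l * (A^t) l j ≤ ∑ l, A x l * Ms t := by
              apply Finset.sum_le_sum
              intro l _
              by_cases hl : l ∈ F
              · exact mul_le_mul_of_nonneg_left (Finset.le_sup' (fun k => (A^t) k j) hl) (hA.1 x l)
              · rw [rowZero A hA F hFclosedA x hx l hl, zero_mul, zero_mul]
          _ = Ms t := by rw [← Finset.sum_mul, hA.2 x, one_mul]
    have hMdec : ∀ {t t'}, t ≤ t' → Ms t' ≤ Ms t := by
      intro t t' hle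
      induction t', hle using Nat.le_induction with
      | base => exact le_rfl
      | succ t' hle ih =>
        refine le_trans (Finset.sup'_le _ _ fun x hx => (hstep t' x hx).2) ih
    have hminc : ∀ {t t'}, t ≤ t' → ms t ≤ ms t' := by
      intro t t' hle
      induction t', hle using Nat.le_induction with
      | base => exact le_rfl
      | succ t' hle ih =>
        refine le_trans ih (Finset.le_inf' _ _ fun x hx => (hstep t' x hx).1)
    have hbounds : ∀ t x, x ∈ F → ms t ≤ (A^t) x j ∧ (A^t) x j ≤ Ms t := fun t x hx =>
      ⟨Finset.inf'_le (fun k => (A^t) k j) hx, Finset.le_sup' (fun k => (A^t) k j) hx⟩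
    have hgapB : ∀ s x x', x ∈ F → x' ∈ F → |(B^s) x j - (B^s) x' j| ≤ (1-ε)^s := by
      intro s
      induction s with
      | zero =>
        intro x x' hx hx'
        simp only [pow_zero, Matrix.one_apply]
        split_ifs <;> norm_num
      | succ s ih =>
        intro x x' hx hx'
        have hexp : ∀ y, (B^(s+1)) y j = ∑ k, B y k * (B^s) k j := fun y => by
          rw [pow_succ', Matrix.mul_apply]
        rw [hexp x, hexp x']
        have hpos_mem : ∀ {y k}, y ∈ F → 0 < B y k → k ∈ F := fun hy h => hFclosedB _ hy _ h
        have key := auxHJ (fun k => B x k) (fun k => B x' k) (fun k => (B^s) k j)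
          (fun k => if k ∈ F then true else false)
          (fun k => hBst.1 x k) (fun k => hBst.1 x' k) (hBst.2 x) (hBst.2 x')
          (by
            intro qb
            cases qb with
            | true =>
              have hfib : univ.filter (fun k => (if k ∈ F then true else false) = true) = F := by
                ext k; by_cases h : k ∈ F <;> simp [h]
              rw [hfib, closedRow B hBst F hFclosedB x hx, closedRow B hBst F hFclosedB x' hx']
            | false =>
              have hz : ∀ (y : Fin N), y ∈ F →
                  ∑ k ∈ univ.filter (fun k => (if k ∈ F then true else false) = false), B y k = 0 := by
                intro y hy
                apply Finset.sum_eq_zero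
                intro k hk
                have hkF : k ∉ F := by
                  rcases mem_filter.1 hk with ⟨-, h2⟩
                  by_cases h : k ∈ F
                  · simp [h] at h2
                  · exact h
                exact rowZero B hBst F hFclosedB y hy k hkF
              rw [hz x hx, hz x' hx'])
          (fun b => if b then F.inf' hFne (fun k => (B^s) k j) else 0)
          ((1-ε)^s) ε (pow_nonneg (by linarith) s)
          (by
            intro k hk
            have hkF : k ∈ F := by
              rcases hk with h | h
              · exact hpos_mem hx h
              · exact hpos_mem hx' h
            simp only [if_pos hkF, if_true]
            constructor
            · exact Finset.inf'_le (fun k => (B^s) k j) hkF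
            · obtain ⟨k0, hk0, heq⟩ := Finset.exists_mem_eq_inf' hFne (fun k => (B^s) k j)
              rw [heq]
              have := ih k k0 hkF hk0
              rw [abs_le] at this
              linarith [this.1]
          )
          (by
            have h1 : ε ≤ min (B x j) (B x' j) :=
              le_min (hεB x j (hFcomm x hx j hjF)) (hεB x' j (hFcomm x' hx' j hjF))
            exact le_trans h1 (Finset.single_le_sum
              (f := fun k => min (B x k) (B x' k))
              (fun k _ => le_min (hBst.1 x k) (hBst.1 x' k)) (mem_univ j)))
        calc |∑ k, B x k * (B^s) k j - ∑ k, B x' k * (B^s) k j| ≤ (1 - ε) * (1-ε)^s := key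
          _ = (1-ε)^(s+1) := by ring
    have hgapA : ∀ t, Ms t - ms t ≤ (1-ε)^(t / L0) := by
      intro t
      have ht0 : L0 * (t / L0) ≤ t := Nat.mul_div_le t L0
      have h1 : Ms t ≤ Ms (L0 * (t / L0)) := hMdec ht0
      have h2 : ms (L0 * (t / L0)) ≤ ms t := hminc ht0
      obtain ⟨a0, ha0, hMa0⟩ := Finset.exists_mem_eq_sup' hFne (fun k => (A^(L0 * (t / L0))) k j)
      obtain ⟨b0, hb0, hmb0⟩ := Finset.exists_mem_eq_inf' hFne (fun k => (A^(L0 * (t / L0))) k j)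
      have hg := hgapB (t / L0) a0 b0 ha0 hb0
      rw [hBpow] at hg
      rw [abs_le] at hg
      have : Ms (L0 * (t / L0)) - ms (L0 * (t / L0)) ≤ (1-ε)^(t / L0) := by
        simp only [hMs, hms]
        rw [hMa0, hmb0]
        linarith [hg.2]
      linarith
    have hint : ∀ {a b t : ℕ}, t ≤ a → t ≤ b → ∀ {y y' : Fin N}, y ∈ F → y' ∈ F →
        |(A^a) y j - (A^b) y' j| ≤ (1-ε)^(t / L0) := by
      intro a b t hta htb y y' hy hy'
      have h1 := hbounds a y hy
      have h2 := hbounds b y' hy'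
      have h3 : Ms a ≤ Ms t := hMdec hta
      have h4 : Ms b ≤ Ms t := hMdec htb
      have h5 : ms t ≤ ms a := hminc hta
      have h6 : ms t ≤ ms b := hminc htb
      have h7 := hgapA t
      rw [abs_le]
      constructor <;> linarith [h1.1, h1.2, h2.1, h2.2]
    have hcauchy : CauchySeq (fun t => (A^t) j j) := by
      apply cauchySeq_of_le_tendsto_0 (fun t => (1-ε)^(t / L0)) _
        (divTend _ (by linarith) (by linarith) L0 hL01)
      intro a b t hta htb
      rw [Real.dist_eq]
      exact hint hta htb hjF hjF
    obtain ⟨π, hπ⟩ := cauchySeq_tendsto_of_complete hcauchy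
    have hπb : ∀ s x, R j x → |(A^s) x j - π| ≤ (1-ε)^(s / L0) := by
      intro s x hx
      have hxF : x ∈ F := mem_filter.2 ⟨mem_univ _, hx⟩
      have h2 : Tendsto (fun t => |(A^s) x j - (A^t) j j|) atTop (𝓝 (|(A^s) x j - π|)) :=
        (tendsto_const_nhds.sub hπ).abs
      apply le_of_tendsto h2
      filter_upwards [eventually_ge_atTop s] with t ht
      exact hint le_rfl ht hxF hjF
    have hπ0 : 0 ≤ π := ge_of_tendsto hπ (Eventually.of_forall (fun t => hnn t j j))
    have hπ1 : π ≤ 1 := le_of_tendsto hπ (Eventually.of_forall (fun t => hle1 t j j))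
    set q : Fin N → ℕ → ℝ := fun x t => ∑ k ∈ F, (A^t) x k with hqd
    have hqmono : ∀ x t t', t ≤ t' → q x t ≤ q x t' := fun x t t' h =>
      massMono' A hA F hFclosedA t t' h x
    have hq0 : ∀ x t, 0 ≤ q x t := fun x t => Finset.sum_nonneg fun k _ => hnn t x k
    have hq1 : ∀ x t, q x t ≤ 1 := by
      intro x t
      have h1 := massOne A hA F t x
      have h2 : 0 ≤ ∑ k ∈ univ \ F, (A^t) x k := Finset.sum_nonneg fun k _ => hnn t x k
      linarith
    have hFsubES : F ⊆ ES := fun k hk =>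
      mem_filter.2 ⟨mem_univ _, hclosedE j k hj (hmemF hk)⟩
    have hOclosedA : ∀ l ∈ ES \ F, ∀ k, 0 < A l k → k ∈ ES \ F := by
      intro l hl k h
      obtain ⟨hlE, hlF⟩ := Finset.mem_sdiff.1 hl
      have hkE : k ∈ ES := hESclosedA l hlE k h
      refine Finset.mem_sdiff.2 ⟨hkE, fun hkF => hlF ?_⟩
      exact mem_filter.2 ⟨mem_univ _, hRtrans (hmemF hkF)
        (((mem_filter.1 hlE).2) k (Relation.ReflTransGen.single h))⟩
    have hqcauchy : ∀ x t t', t ≤ t' → q x t' - q x t ≤ (1-η)^(t / L0) := by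
      intro x t t' h
      have e1t := Finset.sum_sdiff (f := fun k => (A^t) x k) hFsubES
      have e1t' := Finset.sum_sdiff (f := fun k => (A^t') x k) hFsubES
      have e2t := massOne A hA ES t x
      have e2t' := massOne A hA ES t' x
      have hom : ∑ k ∈ ES \ F, (A^t) x k ≤ ∑ k ∈ ES \ F, (A^t') x k :=
        massMono' A hA _ hOclosedA t t' h x
      have hescb := hesc x t
      have hesc' : 0 ≤ ∑ k ∈ univ \ ES, (A^t') x k := Finset.sum_nonneg fun k _ => hnn t' x k
      simp only [hqd]
      linarith
    have hqlim : ∀ x, ∃ Qx, Tendsto (fun t => q x t) atTop (𝓝 Qx) := by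
      intro x
      refine ⟨⨆ t, q x t, tendsto_atTop_ciSup (fun a b hab => hqmono x a b hab) ⟨1, fun y hy => ?_⟩⟩
      obtain ⟨t, rfl⟩ := hy
      exact hq1 x t
    choose Q hQ using hqlim
    have hQb : ∀ t x, |q x t - Q x| ≤ (1-η)^(t / L0) := by
      intro t x
      have hup : Q x ≤ q x t + (1-η)^(t / L0) := by
        apply le_of_tendsto (hQ x)
        filter_upwards [eventually_ge_atTop t] with t' ht'
        linarith [hqcauchy x t t' ht']
      have hlow : q x t ≤ Q x := by
        apply ge_of_tendsto (hQ x)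
        filter_upwards [eventually_ge_atTop t] with t' ht'
        exact hqmono x t t' ht'
      rw [abs_le]
      constructor <;> linarith
    have hQ01 : ∀ x, 0 ≤ Q x ∧ Q x ≤ 1 := fun x =>
      ⟨ge_of_tendsto (hQ x) (Eventually.of_forall (hq0 x)),
       le_of_tendsto (hQ x) (Eventually.of_forall (hq1 x))⟩
    exact ⟨(π, Q), ⟨hπ0, hπ1⟩, hπb, (fun t x => hQb t x), hQ01⟩
  -- choose data
  have hclass' : ∀ j, ∃ d : ℝ × (Fin N → ℝ), Ess j →
      ((0 ≤ d.1 ∧ d.1 ≤ 1) ∧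
      (∀ s x, R j x → |(A^s) x j - d.1| ≤ (1-ε)^(s / L0)) ∧
      (∀ t x, |(∑ k ∈ univ.filter (fun k => R j k), (A^t) x k) - d.2 x| ≤ (1-η)^(t / L0)) ∧
      (∀ x, 0 ≤ d.2 x ∧ d.2 x ≤ 1)) := by
    intro j
    by_cases h : Ess j
    · obtain ⟨d, hd1⟩ := hclass j h
      exact ⟨d, fun _ => hd1⟩
    · exact ⟨(0, fun _ => 0), fun hc => absurd hc h⟩
  choose dat hdat using hclass'
  set γ0 : ℝ := max (1-ε) (1-η) with hγ0
  have hγ00 : 0 ≤ γ0 := le_trans (by linarith) (le_max_left _ _)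
  have hγ01 : γ0 < 1 := max_lt (by linarith) (by linarith)
  have hεγ : (1-ε) ≤ γ0 := le_max_left _ _
  have hηγ : (1-η) ≤ γ0 := le_max_right _ _
  refine ⟨Matrix.of (fun x j => if Ess j then (dat j).2 x * (dat j).1 else 0), 3, γ0, 2*L0,
    by norm_num, hγ00, hγ01, by omega, ?_⟩
  intro m x j
  have hPdef : (Matrix.of (fun x j => if Ess j then (dat j).2 x * (dat j).1 else 0)) x j
      = if Ess j then (dat j).2 x * (dat j).1 else 0 := rfl
  rw [hPdef]
  by_cases hj : Ess j
  · -- essential target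
    rw [if_pos hj]
    obtain ⟨⟨hπ0, hπ1⟩, hπb, hQb, hQ01⟩ := hdat j hj
    set F : Finset (Fin N) := univ.filter (fun k => R j k) with hF
    set s := m / 2 with hs
    set t := m - m / 2 with ht
    have hmts : m = t + s := by omega
    have hts : s ≤ t := by omega
    have hFsub : F ⊆ ES := fun k hk =>
      mem_filter.2 ⟨mem_univ _, hclosedE j k hj ((mem_filter.1 hk).2)⟩
    have hsplit : (A^m) x j = ∑ k ∈ F, (A^t) x k * (A^s) k j
        + ∑ k ∈ ES \ F, (A^t) x k * (A^s) k j
        + ∑ k ∈ univ \ ES, (A^t) x k * (A^s) k j := by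
      have h0 : (A^m) x j = ∑ k, (A^t) x k * (A^s) k j := by
        rw [hmts, pow_add, Matrix.mul_apply]
      rw [h0, ← Finset.sum_sdiff (f := fun k => (A^t) x k * (A^s) k j) (subset_univ ES),
        ← Finset.sum_sdiff (f := fun k => (A^t) x k * (A^s) k j) hFsub]
      ring
    have hmid : ∑ k ∈ ES \ F, (A^t) x k * (A^s) k j = 0 := by
      apply Finset.sum_eq_zero
      intro k hk
      obtain ⟨hkE, hkF⟩ := Finset.mem_sdiff.1 hk
      have hz : (A^s) k j = 0 := by
        by_contra hne
        have hpos : 0 < (A^s) k j := lt_of_le_of_ne (hnn s k j) (Ne.symm hne)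
        have hR1 : R k j := pow_chain s k j hpos
        have hR2 : R j k := (mem_filter.1 hkE).2 j hR1
        exact hkF (mem_filter.2 ⟨mem_univ _, hR2⟩)
      rw [hz, mul_zero]
    have hthirdnn : 0 ≤ ∑ k ∈ univ \ ES, (A^t) x k * (A^s) k j :=
      Finset.sum_nonneg fun k _ => mul_nonneg (hnn t x k) (hnn s k j)
    have hthird : ∑ k ∈ univ \ ES, (A^t) x k * (A^s) k j ≤ (1-η)^(t / L0) := by
      calc ∑ k ∈ univ \ ES, (A^t) x k * (A^s) k j ≤ ∑ k ∈ univ \ ES, (A^t) x k := by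
            apply Finset.sum_le_sum
            intro k _
            exact mul_le_of_le_one_right (hnn t x k) (hle1 s k j)
        _ ≤ (1-η)^(t / L0) := hesc x t
    have hqle : ∑ k ∈ F, (A^t) x k ≤ 1 := by
      have h1 := massOne A hA F t x
      have h2 : 0 ≤ ∑ k ∈ univ \ F, (A^t) x k := Finset.sum_nonneg fun k _ => hnn t x k
      linarith
    have hqnn : 0 ≤ ∑ k ∈ F, (A^t) x k := Finset.sum_nonneg fun k _ => hnn t x k
    have hb1 : |∑ k ∈ F, (A^t) x k * ((A^s) k j - (dat j).1)| ≤ (1-ε)^(s / L0) := by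
      calc |∑ k ∈ F, (A^t) x k * ((A^s) k j - (dat j).1)|
          ≤ ∑ k ∈ F, |(A^t) x k * ((A^s) k j - (dat j).1)| := Finset.abs_sum_le_sum_abs _ _
        _ = ∑ k ∈ F, (A^t) x k * |(A^s) k j - (dat j).1| := by
            apply Finset.sum_congr rfl
            intro k _
            rw [abs_mul, abs_of_nonneg (hnn t x k)]
        _ ≤ ∑ k ∈ F, (A^t) x k * (1-ε)^(s / L0) := by
            apply Finset.sum_le_sum
            intro k hk
            exact mul_le_mul_of_nonneg_left (hπb s k ((mem_filter.1 hk).2)) (hnn t x k)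
        _ = (∑ k ∈ F, (A^t) x k) * (1-ε)^(s / L0) := (Finset.sum_mul _ _ _).symm
        _ ≤ 1 * (1-ε)^(s / L0) :=
            mul_le_mul_of_nonneg_right hqle (pow_nonneg (by linarith) _)
        _ = (1-ε)^(s / L0) := one_mul _
    have hb2 : |(∑ k ∈ F, (A^t) x k) * (dat j).1 - (dat j).2 x * (dat j).1| ≤ (1-η)^(t / L0) := by
      rw [← sub_mul, abs_mul]
      have h1 := hQb t x
      have h2 : |(dat j).1| ≤ 1 := by rw [abs_of_nonneg hπ0]; exact hπ1
      calc |(∑ k ∈ F, (A^t) x k) - (dat j).2 x| * |(dat j).1|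
          ≤ (1-η)^(t / L0) * 1 := by
            apply mul_le_mul h1 h2 (abs_nonneg _)
            exact pow_nonneg (by linarith) _
        _ = (1-η)^(t / L0) := mul_one _
    have hqsum : ∑ k ∈ F, (A^t) x k * (A^s) k j
        = ∑ k ∈ F, (A^t) x k * ((A^s) k j - (dat j).1) + (∑ k ∈ F, (A^t) x k) * (dat j).1 := by
      rw [Finset.sum_mul, ← Finset.sum_add_distrib]
      apply Finset.sum_congr rfl
      intro k _
      ring
    have hcomb : |(A^m) x j - (dat j).2 x * (dat j).1|
        ≤ (1-ε)^(s / L0) + 2*(1-η)^(t / L0) := by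
      rw [hsplit, hmid, hqsum]
      have habs3 : |∑ k ∈ univ \ ES, (A^t) x k * (A^s) k j| ≤ (1-η)^(t / L0) := by
        rw [abs_of_nonneg hthirdnn]; exact hthird
      calc |∑ k ∈ F, (A^t) x k * ((A^s) k j - (dat j).1) + (∑ k ∈ F, (A^t) x k) * (dat j).1 + 0
            + ∑ k ∈ univ \ ES, (A^t) x k * (A^s) k j - (dat j).2 x * (dat j).1|
          = |(∑ k ∈ F, (A^t) x k * ((A^s) k j - (dat j).1))
            + ((∑ k ∈ F, (A^t) x k) * (dat j).1 - (dat j).2 x * (dat j).1)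
            + (∑ k ∈ univ \ ES, (A^t) x k * (A^s) k j)| := by congr 1; ring
        _ ≤ |(∑ k ∈ F, (A^t) x k * ((A^s) k j - (dat j).1))
            + ((∑ k ∈ F, (A^t) x k) * (dat j).1 - (dat j).2 x * (dat j).1)|
            + |∑ k ∈ univ \ ES, (A^t) x k * (A^s) k j| := abs_add_le _ _
        _ ≤ |(∑ k ∈ F, (A^t) x k * ((A^s) k j - (dat j).1))|
            + |((∑ k ∈ F, (A^t) x k) * (dat j).1 - (dat j).2 x * (dat j).1)|
            + |∑ k ∈ univ \ ES, (A^t) x k * (A^s) k j| := by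
              have := abs_add_le (∑ k ∈ F, (A^t) x k * ((A^s) k j - (dat j).1))
                ((∑ k ∈ F, (A^t) x k) * (dat j).1 - (dat j).2 x * (dat j).1)
              linarith
        _ ≤ (1-ε)^(s / L0) + 2*(1-η)^(t / L0) := by linarith
    have he1 : s / L0 = m / (2*L0) := by
      rw [hs, Nat.div_div_eq_div_mul]
    have he2 : (1-η)^(t / L0) ≤ γ0^(m / (2*L0)) := by
      have h1 : (1-η)^(t / L0) ≤ (1-η)^(s / L0) :=
        pow_le_pow_of_le_one (by linarith) (by linarith) (Nat.div_le_div_right hts)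
      have h2 : (1-η)^(s / L0) ≤ γ0^(s / L0) := pow_le_pow_left₀ (by linarith) hηγ _
      rw [← he1]
      exact le_trans h1 h2
    have he3 : (1-ε)^(s / L0) ≤ γ0^(m / (2*L0)) := by
      rw [← he1]
      exact pow_le_pow_left₀ (by linarith) hεγ _
    calc |(A^m) x j - (dat j).2 x * (dat j).1| ≤ (1-ε)^(s / L0) + 2*(1-η)^(t / L0) := hcomb
      _ ≤ γ0^(m / (2*L0)) + 2*γ0^(m / (2*L0)) := by linarith
      _ = 3 * γ0^(m / (2*L0)) := by ring
  · -- transient target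
    rw [if_neg hj, sub_zero]
    have hjmem : j ∈ univ \ ES := Finset.mem_sdiff.2 ⟨mem_univ _, fun h => hj ((mem_filter.1 h).2)⟩
    have h1 : (A^m) x j ≤ ∑ k ∈ univ \ ES, (A^m) x k :=
      Finset.single_le_sum (fun k _ => hnn m x k) hjmem
    have h2 := hesc x m
    rw [abs_of_nonneg (hnn m x j)]
    have h3 : (1-η)^(m / L0) ≤ γ0^(m / L0) := pow_le_pow_left₀ (by linarith) hηγ _
    have h4 : γ0^(m / L0) ≤ γ0^(m / (2*L0)) := by
      apply pow_le_pow_of_le_one hγ00 hγ01.le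
      exact Nat.div_le_div_left (by omega) (by omega)
    have h5 : 0 ≤ γ0^(m / (2*L0)) := pow_nonneg hγ00 _
    calc (A^m) x j ≤ (1-η)^(m / L0) := le_trans h1 h2
      _ ≤ γ0^(m / (2*L0)) := le_trans h3 h4
      _ ≤ 3 * γ0^(m / (2*L0)) := by linarith


lemma fixedPts {N : ℕ} (A P : Matrix (Fin N) (Fin N) ℝ)
    (c γ : ℝ) (L : ℕ) (hγ0 : 0 ≤ γ) (hγ1 : γ < 1) (hL : 1 ≤ L)
    (hb : ∀ m i j, |(A ^ m) i j - P i j| ≤ c * γ ^ (m / L)) :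
    (∀ i j, Tendsto (fun m => (A^m) i j) atTop (𝓝 (P i j))) ∧ A * P = P ∧ P * A = P := by
  have htend : ∀ i j, Tendsto (fun m => (A^m) i j) atTop (𝓝 (P i j)) := by
    intro i j
    have h1 : Tendsto (fun m : ℕ => c * γ ^ (m / L)) atTop (𝓝 0) := by
      simpa using (divTend γ hγ0 hγ1 L hL).const_mul c
    have h2 : Tendsto (fun m => (A^m) i j - P i j) atTop (𝓝 0) :=
      squeeze_zero_norm (fun m => hb m i j) h1
    simpa using h2.add_const (P i j)
  refine ⟨htend, ?_, ?_⟩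
  · ext i j
    have ht1 : Tendsto (fun m => (A^(m+1)) i j) atTop (𝓝 (P i j)) :=
      (htend i j).comp (tendsto_add_atTop_nat 1)
    have ht2 : Tendsto (fun m => (A^(m+1)) i j) atTop (𝓝 ((A * P) i j)) := by
      have he : ∀ m : ℕ, (A^(m+1)) i j = ∑ k, A i k * (A^m) k j := fun m => by
        rw [pow_succ', Matrix.mul_apply]
      apply Tendsto.congr (fun m => (he m).symm)
      rw [Matrix.mul_apply]
      exact tendsto_finset_sum _ (fun k _ => ((htend k j).const_mul (A i k)))
    exact tendsto_nhds_unique ht2 ht1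
  · ext i j
    have ht1 : Tendsto (fun m => (A^(m+1)) i j) atTop (𝓝 (P i j)) :=
      (htend i j).comp (tendsto_add_atTop_nat 1)
    have ht2 : Tendsto (fun m => (A^(m+1)) i j) atTop (𝓝 ((P * A) i j)) := by
      have he : ∀ m : ℕ, (A^(m+1)) i j = ∑ k, (A^m) i k * A k j := fun m => by
        rw [pow_succ, Matrix.mul_apply]
      apply Tendsto.congr (fun m => (he m).symm)
      rw [Matrix.mul_apply]
      exact tendsto_finset_sum _ (fun k _ => ((htend i k).mul_const (A k j)))
    exact tendsto_nhds_unique ht2 ht1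

def inpSum {n : ℕ} (A : Matrix (Fin n) (Fin n) ℝ) (I : ℕ → Fin n → ℝ) (t : ℕ) :
    ℕ → (Fin n → ℝ)
  | 0 => 0
  | (m+1) => A.mulVec (inpSum A I t m) + I (t+m)

lemma mulVecSum {n : ℕ} (A : Matrix (Fin n) (Fin n) ℝ) (S : Finset ℕ) (v : ℕ → Fin n → ℝ) :
    A.mulVec (∑ s ∈ S, v s) = ∑ s ∈ S, A.mulVec (v s) := by
  classical
  induction S using Finset.induction with
  | empty => simp [Matrix.mulVec_zero]
  | @insert a s hnot ih =>
    rw [Finset.sum_insert hnot, Finset.sum_insert hnot, Matrix.mulVec_add, ih]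

set_option maxHeartbeats 1000000 in
theorem stmt8 {n K : ℕ} (C : Fin K → Finset (Fin n)) (hC : IsClustering C)
    (A : Matrix (Fin n) (Fin n) ℝ) (hA : IsStochastic A)
    (hinfl : InterClusterCommonInfluence C A)
    (hspan : HasClusterSpanningTrees C A)
    (hdiag : ∀ i, 0 < A i i)
    (T : ℕ) (hT : 1 ≤ T)
    (u : ℕ → ℝ) (hu : ∀ t, u (t + T) = u t)
    (husum : ∑ k ∈ Finset.range T, u k = 0)
    (α : Fin K → ℝ)
    (I : ℕ → Fin n → ℝ)
    (hI : ∀ t p, ∀ i ∈ C p, I t i = α p * u t)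
    (x : ℕ → Fin n → ℝ)
    (hx : ∀ t, x (t + 1) = A.mulVec (x t) + I t) :
    ∃ v : Fin K → ℕ → ℝ, (∀ p t, v p (t + T) = v p t) ∧
      ∀ p, ∀ j ∈ C p, Tendsto (fun t => |x t j - v p t|) atTop (𝓝 0) := by
  classical
  have hA' : IsStochastic A := hA
  have hnn := powNonneg' A hA'
  have hrs := powRowSum' A hA'
  -- cluster labelling function
  have hgex : ∀ i, ∃ p, i ∈ C p := hC.2
  choose g hg using hgex
  have hgq : ∀ {i : Fin n} {q : Fin K}, i ∈ C q → g i = q := by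
    intro i q hiq
    by_contra hne
    exact Finset.disjoint_left.1 (hC.1 (g i) q hne) (hg i) hiq
  have hfil : ∀ q, univ.filter (fun k => g k = q) = C q := by
    intro q
    ext k
    simp only [mem_filter, mem_univ, true_and]
    constructor
    · rintro rfl; exact hg k
    · exact fun h => hgq h
  -- common influence for powers
  have hinflP : ∀ s (i i' : Fin n), g i = g i' →
      ∀ q, ∑ k ∈ C q, (A^s) i k = ∑ k ∈ C q, (A^s) i' k := by
    intro s
    induction s with
    | zero =>
      intro i i' hgi q
      have h1 : ∀ y : Fin n, ∑ k ∈ C q, (A^0 : Matrix (Fin n) (Fin n) ℝ) y k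
          = if y ∈ C q then (1:ℝ) else 0 := by
        intro y
        rw [pow_zero]
        simp only [Matrix.one_apply]
        rw [Finset.sum_ite_eq (C q) y (fun _ => (1:ℝ))]
      rw [h1 i, h1 i']
      have h2 : (i ∈ C q) ↔ (i' ∈ C q) := by
        constructor
        · intro h; have h3 := hgq h; subst h3; rw [hgi]; exact hg i'
        · intro h; have h3 := hgq h; subst h3; rw [← hgi]; exact hg i
      by_cases h : i ∈ C q
      · rw [if_pos h, if_pos (h2.mp h)]
      · rw [if_neg h, if_neg (fun hh => h (h2.mpr hh))]
    | succ s ih =>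
      intro i i' hgi q
      rw [powExpand A s i (C q), powExpand A s i' (C q)]
      rw [← Finset.sum_fiberwise univ g (fun l => (A^s) i l * ∑ k ∈ C q, A l k),
        ← Finset.sum_fiberwise univ g (fun l => (A^s) i' l * ∑ k ∈ C q, A l k)]
      apply Finset.sum_congr rfl
      intro r _
      apply auxConst
      · intro a ha b hb
        have hga : g a = r := (mem_filter.1 ha).2
        have hgb : g b = r := (mem_filter.1 hb).2
        have haC : a ∈ C r := by rw [← hga]; exact hg a
        have hbC : b ∈ C r := by rw [← hgb]; exact hg b
        exact hinfl r q a haC b hbC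
      · rw [hfil r]
        exact ih i i' hgi r
  -- SC invariance of mulVec
  have hmulSC : ∀ (d : Fin n → ℝ), (∀ k k', g k = g k' → d k = d k') →
      ∀ i i', g i = g i' → (A.mulVec d) i = (A.mulVec d) i' := by
    intro d hd i i' hgi
    show ∑ l, A i l * d l = ∑ l, A i' l * d l
    rw [← Finset.sum_fiberwise univ g (fun l => A i l * d l),
      ← Finset.sum_fiberwise univ g (fun l => A i' l * d l)]
    apply Finset.sum_congr rfl
    intro r _
    apply auxConst
    · intro a ha b hb
      exact hd a b (((mem_filter.1 ha).2).trans ((mem_filter.1 hb).2).symm)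
    · rw [hfil r]
      have haC : i ∈ C (g i) := hg i
      have hbC : i' ∈ C (g i) := by rw [hgi]; exact hg i'
      exact hinfl (g i) r i haC i' hbC
  -- pair differences evolve by powers of A
  have hpair : ∀ t s (i i' : Fin n), g i = g i' →
      x (t+s) i - x (t+s) i' = ((A^s).mulVec (x t)) i - ((A^s).mulVec (x t)) i' := by
    intro t s
    induction s with
    | zero =>
      intro i i' h
      simp [pow_zero, Matrix.one_mulVec]
    | succ s ih =>
      intro i i' hgi
      have hx1 : x ((t+s)+1) = A.mulVec (x (t+s)) + I (t+s) := hx (t+s)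
      have hIeq : I (t+s) i = I (t+s) i' := by
        rw [hI (t+s) (g i) i (hg i), hgi, hI (t+s) (g i') i' (hg i')]
      set d : Fin n → ℝ := fun k => x (t+s) k - ((A^s).mulVec (x t)) k with hdd
      have hdc : ∀ k k', g k = g k' → d k = d k' := by
        intro k k' h
        have := ih k k' h
        simp only [hdd]
        linarith
      have hAd := hmulSC d hdc i i' hgi
      have hxsumd : x (t+s) = (A^s).mulVec (x t) + d := by
        funext k
        simp only [hdd, Pi.add_apply]
        ring
      have hlin : A.mulVec (x (t+s)) = A.mulVec ((A^s).mulVec (x t)) + A.mulVec d := by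
        rw [hxsumd, Matrix.mulVec_add]
      have hmm : A.mulVec ((A^s).mulVec (x t)) = (A^(s+1)).mulVec (x t) := by
        rw [Matrix.mulVec_mulVec, ← pow_succ']
      have e1 : x (t+(s+1)) i = (A^(s+1)).mulVec (x t) i + A.mulVec d i + I (t+s) i := by
        show x ((t+s)+1) i = _
        rw [hx1]
        simp only [Pi.add_apply]
        rw [hlin, hmm]
        simp only [Pi.add_apply]
      have e2 : x (t+(s+1)) i' = (A^(s+1)).mulVec (x t) i' + A.mulVec d i' + I (t+s) i' := by
        show x ((t+s)+1) i' = _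
        rw [hx1]
        simp only [Pi.add_apply]
        rw [hlin, hmm]
        simp only [Pi.add_apply]
      rw [e1, e2, hAd, hIeq]
      ring
  -- scrambling coefficient from spanning trees
  have pmonoA : ∀ m (i j : Fin n), 0 < (A^m) i j → 0 < (A^(m+1)) i j := by
    intro m i j h
    rw [pow_succ', Matrix.mul_apply]
    exact lt_of_lt_of_le (mul_pos (hdiag i) h)
      (Finset.single_le_sum (fun k _ => mul_nonneg (hA.1 i k) (hnn m k j)) (mem_univ i))
  have pmonoA' : ∀ {m m'} (i j : Fin n), m ≤ m' → 0 < (A^m) i j → 0 < (A^m') i j := by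
    intro m m' i j hle
    induction m', hle using Nat.le_induction with
    | base => exact id
    | succ m' hm ih => intro h; exact pmonoA _ _ _ (ih h)
  have hreachpow : ∀ v i, Reaches A v i → ∃ m, 0 < (A^m) i v := by
    intro v i h
    induction h with
    | refl => exact ⟨0, by simp [Matrix.one_apply]⟩
    | @tail b c hab hbc ih =>
      obtain ⟨m, hm⟩ := ih
      refine ⟨m+1, ?_⟩
      rw [pow_succ', Matrix.mul_apply]
      exact lt_of_lt_of_le (mul_pos hbc hm)
        (Finset.single_le_sum (fun k _ => mul_nonneg (hA.1 c k) (hnn m k v)) (mem_univ b))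
  obtain ⟨L1, ε, hL11, hε0, hε1, hscrb⟩ :
      ∃ (L1 : ℕ) (ε : ℝ), 1 ≤ L1 ∧ 0 < ε ∧ ε ≤ 1 ∧ ∀ (i i' : Fin n), g i = g i' →
        ε ≤ ∑ k, min ((A^L1) i k) ((A^L1) i' k) := by
    choose v hv using hspan
    have hm : ∀ pi : Fin K × Fin n, ∃ m, pi.2 ∈ C pi.1 → 0 < (A^m) pi.2 (v pi.1) := by
      intro pi
      by_cases h : pi.2 ∈ C pi.1
      · obtain ⟨m, hm⟩ := hreachpow _ _ (hv pi.1 pi.2 h)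
        exact ⟨m, fun _ => hm⟩
      · exact ⟨0, fun hc => absurd hc h⟩
    choose f hf using hm
    set L1 := 1 + Finset.univ.sup f with hL1
    have hL1pos : ∀ p, ∀ i ∈ C p, 0 < (A^L1) i (v p) := by
      intro p i hi
      have hle : f (p,i) ≤ L1 := by
        rw [hL1]
        have := Finset.le_sup (f := f) (mem_univ (p,i))
        omega
      exact pmonoA' i (v p) hle (hf (p,i) hi)
    by_cases hne : (univ.filter (fun pi : Fin K × Fin n => pi.2 ∈ C pi.1)).Nonempty
    · set S := univ.filter (fun pi : Fin K × Fin n => pi.2 ∈ C pi.1) with hS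
      set fv : Fin K × Fin n → ℝ := fun pi => (A^L1) pi.2 (v pi.1) with hfv
      set ε := S.inf' hne fv with hεd
      have hle1A : ∀ (i j : Fin n), (A^L1) i j ≤ 1 := by
        intro i j
        rw [← hrs L1 i]
        exact Finset.single_le_sum (fun k _ => hnn L1 i k) (mem_univ j)
      have hL1ge : 1 ≤ L1 := by rw [hL1]; omega
      refine ⟨L1, ε, hL1ge, ?_, ?_, ?_⟩
      · obtain ⟨pi, hpi, heq⟩ := Finset.exists_mem_eq_inf' hne fv
        rw [hεd, heq, hfv]
        exact hL1pos pi.1 pi.2 ((mem_filter.1 hpi).2)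
      · obtain ⟨pi, hpi, heq⟩ := Finset.exists_mem_eq_inf' hne fv
        rw [hεd, heq, hfv]
        exact hle1A _ _
      · intro i i' hgi
        have hi : i ∈ C (g i) := hg i
        have hi' : i' ∈ C (g i) := by rw [hgi]; exact hg i'
        have hm1 : ((g i : Fin K), i) ∈ S := mem_filter.2 ⟨mem_univ _, hi⟩
        have hm2 : ((g i : Fin K), i') ∈ S := mem_filter.2 ⟨mem_univ _, hi'⟩
        have h1 : ε ≤ (A^L1) i (v (g i)) := Finset.inf'_le fv hm1
        have h2 : ε ≤ (A^L1) i' (v (g i)) := Finset.inf'_le fv hm2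
        have h3 : ε ≤ min ((A^L1) i (v (g i))) ((A^L1) i' (v (g i))) := le_min h1 h2
        refine le_trans h3 (Finset.single_le_sum
          (f := fun k => min ((A^L1) i k) ((A^L1) i' k))
          (fun k _ => le_min (hnn L1 i k) (hnn L1 i' k)) (mem_univ (v (g i))))
    · refine ⟨1, 1, le_rfl, by norm_num, le_rfl, ?_⟩
      intro i i' hgi
      exfalso
      exact hne ⟨(g i, i), mem_filter.2 ⟨mem_univ _, hg i⟩⟩
  -- one multi-step Hajnal estimate
  have hstepHJ : ∀ (s : ℕ) (μ : ℝ), 0 ≤ μ →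
      (∀ i i', g i = g i' → μ ≤ ∑ k, min ((A^s) i k) ((A^s) i' k)) →
      ∀ (t : ℕ) (D : ℝ), 0 ≤ D → (∀ k k', g k = g k' → |x t k - x t k'| ≤ D) →
      ∀ i i', g i = g i' → |x (t+s) i - x (t+s) i'| ≤ (1-μ) * D := by
    intro s μ hμ0 hμb t D hD hpairs i i' hgi
    rw [hpair t s i i' hgi]
    have hmv : ∀ y, ((A^s).mulVec (x t)) y = ∑ k, (A^s) y k * x t k := fun y => by
      simp [Matrix.mulVec, dotProduct]
    rw [hmv i, hmv i']
    have hcc : ∀ k : Fin n, (C (g k)).Nonempty := fun k => ⟨k, hg k⟩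
    apply auxHJ (fun k => (A^s) i k) (fun k => (A^s) i' k) (x t) g
      (fun k => hnn s i k) (fun k => hnn s i' k) (hrs s i) (hrs s i')
      (by
        intro q
        rw [hfil q]
        exact hinflP s i i' hgi q)
      (fun q => if h : (C q).Nonempty then (C q).inf' h (x t) else 0)
      D μ hD
      (by
        intro k _
        rw [dif_pos (hcc k)]
        constructor
        · exact Finset.inf'_le (x t) (hg k)
        · obtain ⟨k0, hk0, heq⟩ := Finset.exists_mem_eq_inf' (hcc k) (x t)
          rw [heq]
          have hgk0 : g k = g k0 := (hgq hk0).symm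
          have := hpairs k k0 hgk0
          rw [abs_le] at this
          linarith [this.1])
      (hμb i i' hgi)
  -- synchronization bound
  obtain ⟨D0, hD00, hsyncb⟩ : ∃ D0 : ℝ, 0 ≤ D0 ∧ ∀ t (i i' : Fin n), g i = g i' →
      |x t i - x t i'| ≤ D0 * (1-ε)^(t / L1) := by
    set D0 := ∑ ab : Fin n × Fin n, |x 0 ab.1 - x 0 ab.2| with hD0
    have hD00 : 0 ≤ D0 := Finset.sum_nonneg fun ab _ => abs_nonneg _
    have hpair0 : ∀ (i i' : Fin n), |x 0 i - x 0 i'| ≤ D0 :=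
      fun i i' => Finset.single_le_sum
        (f := fun ab : Fin n × Fin n => |x 0 ab.1 - x 0 ab.2|)
        (fun ab _ => abs_nonneg _) (mem_univ (i, i'))
    refine ⟨D0, hD00, ?_⟩
    intro t
    induction t using Nat.strong_induction_on with
    | _ t ih =>
      rcases Nat.lt_or_ge t L1 with hcase | hcase
      · have hdiv : t / L1 = 0 := Nat.div_eq_of_lt hcase
        rw [hdiv, pow_zero, mul_one]
        match t, hcase with
        | 0, _ => exact fun i i' _ => hpair0 i i'
        | (t0+1), hcase =>
          intro i i' hgi
          have hub : ∀ k k', g k = g k' → |x t0 k - x t0 k'| ≤ D0 := by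
            intro k k' h
            have := ih t0 (by omega) k k' h
            have hd0 : t0 / L1 = 0 := Nat.div_eq_of_lt (by omega)
            rwa [hd0, pow_zero, mul_one] at this
          have hμtriv : ∀ (i i' : Fin n), g i = g i' →
              (0:ℝ) ≤ ∑ k, min ((A^1) i k) ((A^1) i' k) :=
            fun i i' _ => Finset.sum_nonneg fun k _ => le_min (hnn 1 i k) (hnn 1 i' k)
          have := hstepHJ 1 0 le_rfl hμtriv t0 D0 hD00 hub i i' hgi
          simpa using this
      · intro i i' hgi
        have hstep := hstepHJ L1 ε hε0.le hscrb (t - L1)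
          (D0 * (1-ε)^((t-L1) / L1))
          (mul_nonneg hD00 (pow_nonneg (by linarith : (0:ℝ) ≤ 1-ε) _))
          (fun k k' h => ih (t - L1) (by omega) k k' h) i i' hgi
        rw [Nat.sub_add_cancel hcase] at hstep
        have hde : t / L1 = (t - L1) / L1 + 1 := Nat.div_eq_sub_div (by omega) hcase
        rw [hde]
        calc |x t i - x t i'| ≤ (1-ε) * (D0 * (1-ε)^((t-L1) / L1)) := hstep
          _ = D0 * (1-ε)^((t-L1)/L1 + 1) := by ring
  have hsync0 : ∀ i i', g i = g i' → Tendsto (fun t => |x t i - x t i'|) atTop (𝓝 0) := by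
    intro i i' hgi
    apply squeeze_zero (fun t => abs_nonneg _) (fun t => hsyncb t i i' hgi)
    simpa using (divTend (1-ε) (by linarith) (by linarith) L1 hL11).const_mul D0
  -- Theorem E for A
  obtain ⟨P, c0, γ, L2, hc00, hγ0, hγ1, hL21, hbnd⟩ := thmE A hA' hdiag
  obtain ⟨htendP, hAP, hPA⟩ := fixedPts A P c0 γ L2 hγ0 hγ1 hL21 hbnd
  -- input periodicity
  have hIper : ∀ t, I (t + T) = I t := by
    intro t
    funext k
    rw [hI (t+T) (g k) k (hg k), hI t (g k) k (hg k), hu t]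
  have hwin : ∀ t, ∑ k ∈ Finset.range T, u (t + k) = 0 := by
    intro t
    induction t with
    | zero => simpa using husum
    | succ t ih =>
      have e1 : ∑ k ∈ range T, u (t+1+k) = ∑ k ∈ range T, u (t+(k+1)) := by
        apply Finset.sum_congr rfl
        intro k _
        congr 1
        ring
      have e2 : ∑ k ∈ range (T+1), u (t+k) = ∑ k ∈ range T, u (t+(k+1)) + u (t+0) :=
        Finset.sum_range_succ' (fun k => u (t+k)) T
      have e3 : ∑ k ∈ range (T+1), u (t+k) = ∑ k ∈ range T, u (t+k) + u (t+T) :=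
        Finset.sum_range_succ (fun k => u (t+k)) T
      have e4 : u (t+T) = u t := hu t
      have e5 : u (t+0) = u t := by rw [Nat.add_zero]
      rw [e1]
      linarith [ih]
  set a : Fin n → ℝ := fun k => α (g k) with ha
  have hIsmul : ∀ t', I t' = u t' • a := by
    intro t'
    funext k
    rw [hI t' (g k) k (hg k)]
    simp only [ha, Pi.smul_apply, smul_eq_mul]
    ring
  have hxsum : ∀ t m, x (t+m) = (A^m).mulVec (x t) + inpSum A I t m := by
    intro t m
    induction m with
    | zero => simp [inpSum, Matrix.one_mulVec]
    | succ m ih =>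
      show x ((t+m)+1) = (A^(m+1)).mulVec (x t) + inpSum A I t (m+1)
      have hunf : inpSum A I t (m+1) = A.mulVec (inpSum A I t m) + I (t+m) := rfl
      rw [hx (t+m), ih, Matrix.mulVec_add, Matrix.mulVec_mulVec, ← pow_succ', hunf, add_assoc]
  have hinpPer : ∀ t m, inpSum A I (t+T) m = inpSum A I t m := by
    intro t m
    induction m with
    | zero => rfl
    | succ m ih =>
      show A.mulVec (inpSum A I (t+T) m) + I ((t+T)+m) = A.mulVec (inpSum A I t m) + I (t+m)
      rw [ih]
      congr 1
      have hidx : (t+T)+m = (t+m)+T := by ring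
      rw [hidx, hIper (t+m)]
  have hinpPerIter : ∀ t m, inpSum A I (t + m*T) T = inpSum A I t T := by
    intro t m
    induction m with
    | zero => norm_num
    | succ m ih =>
      have hidx : t + (m+1)*T = (t + m*T) + T := by ring
      rw [hidx, hinpPer (t+m*T), ih]
  have hPinp : ∀ t m, P.mulVec (inpSum A I t m) = (∑ k ∈ range m, u (t+k)) • P.mulVec a := by
    intro t m
    induction m with
    | zero => simp [inpSum, Matrix.mulVec_zero]
    | succ m ih =>
      show P.mulVec (A.mulVec (inpSum A I t m) + I (t+m)) = _
      rw [Matrix.mulVec_add, Matrix.mulVec_mulVec, hPA, ih, hIsmul (t+m),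
        Matrix.mulVec_smul, Finset.sum_range_succ, add_smul]
  have hper : ∀ t m, x (t + m*T) = (A^(m*T)).mulVec (x t)
      + ∑ s ∈ range m, (A^(s*T)).mulVec (inpSum A I t T) := by
    intro t m
    induction m with
    | zero => simp [Matrix.one_mulVec]
    | succ m ih =>
      have hidx : t + (m+1)*T = (t + m*T) + T := by ring
      have hexp : T + m*T = (m+1)*T := by ring
      rw [hidx, hxsum (t + m*T) T, ih, hinpPerIter t m]
      rw [Matrix.mulVec_add, Matrix.mulVec_mulVec, ← pow_add, hexp, mulVecSum]
      have hsum2 : ∑ s ∈ range m, (A^T) *ᵥ ((A^(s*T)) *ᵥ inpSum A I t T)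
          = ∑ s ∈ range m, (A^((s+1)*T)) *ᵥ inpSum A I t T := by
        apply Finset.sum_congr rfl
        intro s _
        rw [Matrix.mulVec_mulVec, ← pow_add]
        congr 2
        ring
      rw [hsum2]
      have hre : ∑ s ∈ range (m+1), (A^(s*T)) *ᵥ inpSum A I t T
          = ∑ s ∈ range m, (A^((s+1)*T)) *ᵥ inpSum A I t T + (A^(0*T)) *ᵥ inpSum A I t T :=
        Finset.sum_range_succ' (fun s => (A^(s*T)) *ᵥ inpSum A I t T) m
      rw [hre]
      have h0T : (A^(0*T)) *ᵥ inpSum A I t T = inpSum A I t T := by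
        norm_num [Matrix.one_mulVec]
      rw [h0T]
      abel
  have hPc : ∀ t, P.mulVec (inpSum A I t T) = 0 := by
    intro t
    rw [hPinp t T, hwin t, zero_smul]
  have hbndP : ∀ (y : Fin n → ℝ) (s : ℕ) (j : Fin n),
      |((A^s).mulVec y) j - (P.mulVec y) j| ≤ (∑ k, |y k|) * (c0 * γ^(s / L2)) := by
    intro y s j
    have h1 : ((A^s).mulVec y) j - (P.mulVec y) j = ∑ k, ((A^s) j k - P j k) * y k := by
      simp only [Matrix.mulVec, dotProduct]
      rw [← Finset.sum_sub_distrib]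
      apply Finset.sum_congr rfl
      intro k _
      ring
    rw [h1]
    calc |∑ k, ((A^s) j k - P j k) * y k| ≤ ∑ k, |((A^s) j k - P j k) * y k| :=
          Finset.abs_sum_le_sum_abs _ _
      _ = ∑ k, |(A^s) j k - P j k| * |y k| := by
          apply Finset.sum_congr rfl
          intro k _
          rw [abs_mul]
      _ ≤ ∑ k, (c0 * γ^(s / L2)) * |y k| := by
          apply Finset.sum_le_sum
          intro k _
          exact mul_le_mul_of_nonneg_right (hbnd s j k) (abs_nonneg _)
      _ = (∑ k, |y k|) * (c0 * γ^(s / L2)) := by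
          rw [← Finset.mul_sum]
          ring
  have hsummable : ∀ t j, Summable (fun s => ((A^(s*T)).mulVec (inpSum A I t T)) j) := by
    intro t j
    apply Summable.of_abs
    apply Summable.of_nonneg_of_le (fun s => abs_nonneg _) _
      (((sumGeo γ hγ0 hγ1 L2 hL21).mul_left ((∑ k, |inpSum A I t T k|) * c0)))
    intro s
    have h1 := hbndP (inpSum A I t T) (s*T) j
    rw [hPc t] at h1
    simp only [Pi.zero_apply, sub_zero] at h1
    have h2 : γ^((s*T) / L2) ≤ γ^(s / L2) :=
      pow_le_pow_of_le_one hγ0 hγ1.le (Nat.div_le_div_right (Nat.le_mul_of_pos_right s (by omega)))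
    have h3 : 0 ≤ ∑ k, |inpSum A I t T k| := Finset.sum_nonneg fun k _ => abs_nonneg _
    calc |((A^(s*T)).mulVec (inpSum A I t T)) j|
        ≤ (∑ k, |inpSum A I t T k|) * (c0 * γ^((s*T) / L2)) := h1
      _ ≤ (∑ k, |inpSum A I t T k|) * (c0 * γ^(s / L2)) := by
          apply mul_le_mul_of_nonneg_left _ h3
          exact mul_le_mul_of_nonneg_left h2 hc00
      _ = (∑ k, |inpSum A I t T k|) * c0 * γ^(s / L2) := by ring
  set ℓ : ℕ → Fin n → ℝ :=
    fun t j => (P.mulVec (x t)) j + ∑' s, ((A^(s*T)).mulVec (inpSum A I t T)) j with hℓ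
  have hTmul : Tendsto (fun m : ℕ => m*T) atTop atTop := by
    apply tendsto_atTop_atTop.2
    intro b
    exact ⟨b, fun m hm => le_trans hm (Nat.le_mul_of_pos_right m (by omega))⟩
  have hconv : ∀ t j, Tendsto (fun m => x (t + m*T) j) atTop (𝓝 (ℓ t j)) := by
    intro t j
    have h1 : Tendsto (fun m => ((A^(m*T)).mulVec (x t)) j) atTop (𝓝 ((P.mulVec (x t)) j)) := by
      have he : ∀ m : ℕ, ((A^(m*T)).mulVec (x t)) j = ∑ k, (A^(m*T)) j k * x t k := fun m => by
        simp [Matrix.mulVec, dotProduct]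
      apply Tendsto.congr (fun m => (he m).symm)
      have he2 : (P.mulVec (x t)) j = ∑ k, P j k * x t k := by
        simp [Matrix.mulVec, dotProduct]
      rw [he2]
      apply tendsto_finset_sum
      intro k _
      exact (((htendP j k).comp hTmul).mul_const (x t k))
    have h2 : Tendsto (fun m => ∑ s ∈ range m, ((A^(s*T)).mulVec (inpSum A I t T)) j) atTop
        (𝓝 (∑' s, ((A^(s*T)).mulVec (inpSum A I t T)) j)) :=
      (hsummable t j).hasSum.tendsto_sum_nat
    have h3 := h1.add h2
    apply h3.congr
    intro m
    have happ := congrFun (hper t m) j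
    rw [happ]
    simp [Finset.sum_apply]
  have hℓper : ∀ t j, ℓ (t + T) j = ℓ t j := by
    intro t j
    have h1 := hconv (t+T) j
    have h2 : Tendsto (fun m => x ((t+T) + m*T) j) atTop (𝓝 (ℓ t j)) := by
      have h3 := (hconv t j).comp (tendsto_add_atTop_nat 1)
      apply h3.congr
      intro m
      show x (t + (m+1)*T) j = x ((t+T) + m*T) j
      congr 1
      ring
    exact tendsto_nhds_unique h1 h2
  have hℓiter : ∀ r m j, ℓ (r + m*T) j = ℓ r j := by
    intro r m j
    induction m with
    | zero => norm_num
    | succ m ih =>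
      have hidx : r + (m+1)*T = (r + m*T) + T := by ring
      rw [hidx, hℓper (r + m*T) j, ih]
  refine ⟨fun p t => if h : (C p).Nonempty then ℓ t h.choose else 0, ?_, ?_⟩
  · intro p t
    by_cases h : (C p).Nonempty
    · simp only [dif_pos h]
      exact hℓper t _
    · simp only [dif_neg h]
  · intro p j hj
    have hne : (C p).Nonempty := ⟨j, hj⟩
    have hj0m : hne.choose ∈ C p := hne.choose_spec
    have hgj : g j = p := hgq hj
    have hgj0 : g hne.choose = p := hgq hj0m
    have hterm2 : Tendsto (fun t => |x t hne.choose - ℓ t hne.choose|) atTop (𝓝 0) := by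
      apply resTend T hT
      intro r hr
      have hc0' : Tendsto (fun m => x (r + m*T) hne.choose) atTop (𝓝 (ℓ r hne.choose)) :=
        hconv r hne.choose
      have h4 : Tendsto (fun m => |x (r + m*T) hne.choose - ℓ r hne.choose|) atTop (𝓝 0) := by
        have h5 := (hc0'.sub_const (ℓ r hne.choose)).abs
        simpa using h5
      apply h4.congr
      intro m
      rw [hℓiter r m hne.choose]
    have hterm1 : Tendsto (fun t => |x t j - x t hne.choose|) atTop (𝓝 0) :=
      hsync0 j hne.choose (by rw [hgj, hgj0])
    simp only [dif_pos hne]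
    apply squeeze_zero (fun t => abs_nonneg _)
      (fun t => abs_sub_le (x t j) (x t hne.choose) (ℓ t hne.choose))
    simpa using hterm1.add hterm2
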